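/- Fix an integer b > 1. The function n ↦ Bound(n,b) given by the closed formula satisfies the recurrence Bound(0,b) = 0 and, for every integer n ≥ 1, Bound(n,b) = n + min { Σ_{i=1}^{b} Bound(a_i, b) : (a_1,…,a_b) ∈ ℕ^b, Σ_{i=1}^{b} a_i = n − 1 }. (Equivalently, Bound(n,b) is the minimum possible sum of depths of the nodes of a rooted tree with n nodes in which every node has at most b children, where the root has depth 1.) -/

import Mathlib

/-!
Formalization of guessing games (Wordle-style), following the paper's definitions:
guesses `G`, secrets `S ⊆ G`, responses `R` with `|R| > 1`, affirmative response
`r* ∈ R`, and an answering function `a` with `a(g,s) = r* ↔ g = s`.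
-/

structure GuessingGame (α ρ : Type*) [DecidableEq α] [DecidableEq ρ] where
  G : Finset α
  S : Finset α
  R : Finset ρ
  rstar : ρ
  ans : α → α → ρ
  S_subset_G : S ⊆ G
  one_lt_card_R : 1 < R.card
  rstar_mem : rstar ∈ R
  ans_mem : ∀ g ∈ G, ∀ s ∈ S, ans g s ∈ R
  ans_eq_rstar_iff : ∀ g ∈ G, ∀ s ∈ S, (ans g s = rstar ↔ g = s)

namespace GuessingGame

variable {α ρ : Type*} [DecidableEq α] [DecidableEq ρ] (gm : GuessingGame α ρ)

/-- The split `C_{g,r} = {c ∈ C : a(g,c) = r}`. -/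
def split (C : Finset α) (g : α) (r : ρ) : Finset α :=
  C.filter fun c => gm.ans g c = r

/-- `nSplits(g,C) = |{r ∈ R : C_{g,r} ≠ ∅}|`. -/
def nSplits (g : α) (C : Finset α) : ℕ :=
  (gm.R.filter fun r => (gm.split C g r).Nonempty).card

/-- The useful guesses `UG(C)`: for `|C| > 1` the guesses `g ∈ G` with
`nSplits(g,C) ≠ 1`; for `|C| ≤ 1`, `UG(C) = C`. -/
def UG (C : Finset α) : Finset α :=
  if 1 < C.card then gm.G.filter fun g => gm.nSplits g C ≠ 1 else C

/-- `MaxSplits(C) = max_{g ∈ G} nSplits(g,C)`. -/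
def MaxSplits (C : Finset α) : ℕ :=
  gm.G.sup fun g => gm.nSplits g C

end GuessingGame

/-- `Bound(n,b)`: `Bound(0,b) = 0`, `Bound(n,1) = n(n+1)/2`, and for `n > 0`, `b > 1`,
`Bound(n,b) = Σ_{i=1}^{k} i·b^{i-1} + (k+1)·(n - (b^k - 1)/(b-1))` where
`k = ⌊log_b (n(b-1)+1)⌋`. -/
def Bound (n b : ℕ) : ℕ :=
  if n = 0 then 0
  else if b = 1 then n * (n + 1) / 2
  else
    (∑ i ∈ Finset.range (Nat.log b (n * (b - 1) + 1)), (i + 1) * b ^ i) +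
      (Nat.log b (n * (b - 1) + 1) + 1) *
        (n - (b ^ Nat.log b (n * (b - 1) + 1) - 1) / (b - 1))

namespace GuessingGame

variable {α ρ : Type*} [DecidableEq α] [DecidableEq ρ] (gm : GuessingGame α ρ)

/-- Fuel-based implementation of the well-founded recursion defining `MinTotal`:
`MinTotal(∅) = 0` and for nonempty `C`,
`MinTotal(C) = min_{g ∈ UG(C)} (|C| + Σ_{r ∈ R \ {r*}} MinTotal(C_{g,r}))`.
Fuel `|C|` suffices since for a useful guess every split is a proper subset of `C`. -/
noncomputable def MinTotalAux : ℕ → Finset α → ℕ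
  | 0, _ => 0
  | n + 1, C =>
    if C = ∅ then 0
    else
      sInf (↑((gm.UG C).image fun g =>
        C.card + ∑ r ∈ gm.R.erase gm.rstar, MinTotalAux n (gm.split C g r)) : Set ℕ)

/-- `MinTotal(C)`. -/
noncomputable def MinTotal (C : Finset α) : ℕ :=
  gm.MinTotalAux C.card C

/-- `V*(g,C) = |C| + Σ_{r ∈ R \ {r*}} MinTotal(C_{g,r})`. -/
noncomputable def Vstar (g : α) (C : Finset α) : ℕ :=
  C.card + ∑ r ∈ gm.R.erase gm.rstar, gm.MinTotal (gm.split C g r)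

/-- The lower bounds `LB_i` (`i ≥ 1`; `LB 0` is junk):
`LB_1(C) = Bound(|C|, MaxSplits(S))`, `LB_2(C) = Bound(|C|, MaxSplits(C))`, and for
`i ≥ 1`, `LB_{i+2}(∅) = 0` and `LB_{i+2}(C) = min_{g ∈ UG(C)} V_i(g,C)` for nonempty `C`,
where `V_i(g,C) = |C| + Σ_{r ∈ R \ {r*}} LB_i(C_{g,r})`. -/
noncomputable def LB : ℕ → Finset α → ℕ
  | 0, _ => 0
  | 1, C => Bound C.card (gm.MaxSplits gm.S)
  | 2, C => Bound C.card (gm.MaxSplits C)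
  | n + 3, C =>
    if C = ∅ then 0
    else
      sInf (↑((gm.UG C).image fun g =>
        C.card + ∑ r ∈ gm.R.erase gm.rstar, LB (n + 1) (gm.split C g r)) : Set ℕ)

/-- `V_i(g,C) = |C| + Σ_{r ∈ R \ {r*}} LB_i(C_{g,r})`. -/
noncomputable def V (i : ℕ) (g : α) (C : Finset α) : ℕ :=
  C.card + ∑ r ∈ gm.R.erase gm.rstar, gm.LB i (gm.split C g r)

end GuessingGame


-- depth-minus-one of node j+1 in BFS order of infinite complete b-ary tree
def BD (b j : ℕ) : ℕ := Nat.log b (j * (b - 1) + 1)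

-- sum of depths of first n nodes
def FF (b n : ℕ) : ℕ := ∑ j ∈ Finset.range n, (BD b j + 1)

def EE (b i : ℕ) : ℕ := (b ^ i - 1) / (b - 1)

lemma EE_mul (b : ℕ) (hb : 1 < b) (i : ℕ) : (b - 1) * EE b i = b ^ i - 1 := by
  apply Nat.mul_div_cancel'
  simpa using Nat.sub_dvd_pow_sub_pow b 1 i

lemma EE_succ (b : ℕ) (hb : 1 < b) (i : ℕ) : EE b (i + 1) = EE b i + b ^ i := by
  have h1 := EE_mul b hb i
  have h2 := EE_mul b hb (i + 1)
  have hp : (0:ℕ) < b ^ i := Nat.pow_pos (by omega)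
  have hps : b ^ (i+1) = b * b ^ i := by ring
  apply Nat.eq_of_mul_eq_mul_left (show 0 < b - 1 by omega)
  rw [Nat.mul_add, h1, h2]
  have h3 : (b-1) * b ^ i = b * b ^ i - b ^ i := by
    rw [Nat.sub_mul, one_mul]
  have h4 : b ^ i ≤ b * b ^ i := Nat.le_mul_of_pos_left _ (by omega)
  rw [hps, h3]
  omega

lemma BD_le_iff (b : ℕ) (hb : 1 < b) (i j : ℕ) :
    i + 1 ≤ BD b j ↔ EE b (i + 1) ≤ j := by
  have h0 : j * (b - 1) + 1 ≠ 0 := by omega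
  rw [BD, Nat.le_log_iff_pow_le hb h0]
  have h1 := EE_mul b hb (i + 1)
  have hp : (0:ℕ) < b ^ (i+1) := Nat.pow_pos (by omega)
  constructor
  · intro h
    have : (b - 1) * EE b (i+1) ≤ j * (b - 1) := by omega
    rw [Nat.mul_comm j] at this
    exact Nat.le_of_mul_le_mul_left this (by omega)
  · intro h
    have : (b - 1) * EE b (i+1) ≤ (b-1) * j := Nat.mul_le_mul_left _ h
    rw [Nat.mul_comm (b-1) j] at this
    omega

lemma BD_mono (b : ℕ) {j k : ℕ} (h : j ≤ k) : BD b j ≤ BD b k :=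
  Nat.log_mono_right (by nlinarith [Nat.sub_le b 1])

lemma BD_zero (b : ℕ) : BD b 0 = 0 := by simp [BD]



-- Lemma B: sum of BD as a sum of "tail counts"
lemma sum_BD (b : ℕ) (hb : 1 < b) (n : ℕ) :
    ∑ j ∈ Finset.range n, BD b j =
      ∑ i ∈ Finset.range (BD b n), (n - EE b (i + 1)) := by
  set k := BD b n with hk
  have step : ∀ j ∈ Finset.range n, BD b j =
      ∑ i ∈ Finset.range k, (if EE b (i+1) ≤ j then 1 else 0) := by
    intro j hj
    simp only [Finset.mem_range] at hj
    have hle : BD b j ≤ k := BD_mono b (le_of_lt hj)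
    have h1 : ∀ i, (if EE b (i+1) ≤ j then (1:ℕ) else 0) = if i < BD b j then 1 else 0 := by
      intro i
      by_cases h : EE b (i+1) ≤ j
      · rw [if_pos h, if_pos (show i < BD b j from (BD_le_iff b hb i j).mpr h)]
      · rw [if_neg h, if_neg (show ¬ i < BD b j from fun hc => h ((BD_le_iff b hb i j).mp hc))]
    rw [Finset.sum_congr rfl (fun i _ => h1 i), Finset.sum_boole]
    have h2 : (Finset.range k).filter (fun i => i < BD b j) = Finset.range (BD b j) := by
      ext x; simp only [Finset.mem_filter, Finset.mem_range]; omega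
    simp [h2]
  rw [Finset.sum_congr rfl step, Finset.sum_comm]
  apply Finset.sum_congr rfl
  intro i _
  rw [Finset.sum_boole]
  have h3 : (Finset.range n).filter (fun j => EE b (i+1) ≤ j) = Finset.Ico (EE b (i+1)) n := by
    ext x; simp only [Finset.mem_filter, Finset.mem_range, Finset.mem_Ico]; omega
  simp [h3, Nat.card_Ico]

-- Lemma C: the closed-form rearrangement
lemma closed_identity (b : ℕ) (hb : 1 < b) :
    ∀ (k n : ℕ), EE b k ≤ n →
      (∑ i ∈ Finset.range k, (i + 1) * b ^ i) + (k + 1) * (n - EE b k)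
        = n + ∑ i ∈ Finset.range k, (n - EE b (i + 1)) := by
  intro k
  induction k with
  | zero => intro n _; simp [EE]
  | succ k ih =>
    intro n hE
    have hEs : EE b (k+1) = EE b k + b ^ k := EE_succ b hb k
    have hEk : EE b k ≤ n := by omega
    rw [Finset.sum_range_succ, Finset.sum_range_succ, ← add_assoc, ← ih n hEk]
    have hu : n - EE b k = (n - EE b (k+1)) + b ^ k := by omega
    rw [ih n hEk, ← ih n hEk, hu]
    ring

lemma Bound_eq_FF (b : ℕ) (hb : 1 < b) (n : ℕ) : Bound n b = FF b n := by
  rcases Nat.eq_zero_or_pos n with rfl | hn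
  · simp [Bound, FF]
  · have hb1 : b ≠ 1 := by omega
    rw [Bound, if_neg (by omega), if_neg hb1]
    have hk : Nat.log b (n * (b - 1) + 1) = BD b n := rfl
    rw [hk]
    have hEE : (b ^ BD b n - 1) / (b - 1) = EE b (BD b n) := rfl
    rw [hEE]
    have hle : EE b (BD b n) ≤ n := by
      have h1 : b ^ BD b n ≤ n * (b - 1) + 1 := Nat.pow_log_le_self b (by omega)
      have h2 := EE_mul b hb (BD b n)
      have h3 : (b - 1) * EE b (BD b n) ≤ (b - 1) * n := by
        rw [h2, Nat.mul_comm (b-1) n] at *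
        omega
      exact Nat.le_of_mul_le_mul_left h3 (by omega)
    rw [closed_identity b hb (BD b n) n hle, ← sum_BD b hb n]
    rw [FF, Finset.sum_add_distrib, Finset.sum_const, Finset.card_range]
    simp only [smul_eq_mul, mul_one]
    omega


-- key recurrence: BD (j+1) = BD (j/b) + 1
lemma BD_succ (b : ℕ) (hb : 1 < b) (j : ℕ) :
    BD b (j + 1) = BD b (j / b) + 1 := by
  obtain ⟨c, rfl⟩ : ∃ c, b = c + 2 := ⟨b - 2, by omega⟩
  set b := c + 2 with hbdef
  have hb0 : 0 < b := by omega
  set q := j / b with hq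
  set r := j % b with hrdef
  have hr : r < b := Nat.mod_lt _ hb0
  have hqr : b * q + r = j := Nat.div_add_mod j b
  set x := q * (b - 1) + 1 with hx
  have hx0 : x ≠ 0 := by omega
  set L := Nat.log b x with hL
  have key : (j + 1) * (b - 1) + 1 = b * x + r * (b - 1) := by
    rw [← hqr, hx, hbdef]
    have : c + 2 - 1 = c + 1 := by omega
    rw [this]
    ring
  have hlow : b ^ (L + 1) ≤ b * x + r * (b - 1) := by
    have h1 : b ^ L ≤ x := Nat.pow_log_le_self b hx0
    have : b * b ^ L ≤ b * x := Nat.mul_le_mul_left _ h1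
    rw [pow_succ, mul_comm (b ^ L) b]
    omega
  have hhigh : b * x + r * (b - 1) < b ^ (L + 2) := by
    have h1 : x < b ^ (L + 1) := Nat.lt_pow_succ_log_self hb x
    have hdvd : (b - 1) ∣ b ^ (L + 1) - x := by
      have e1 : b ^ (L+1) - x = (b ^ (L+1) - 1) - q * (b - 1) := by omega
      rw [e1]
      apply Nat.dvd_sub
      · simpa using Nat.sub_dvd_pow_sub_pow b 1 (L+1)
      · exact dvd_mul_left (b-1) q
    have ht : b - 1 ≤ b ^ (L+1) - x := Nat.le_of_dvd (by omega) hdvd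
    have hxb : x + (b - 1) ≤ b ^ (L + 1) := by omega
    have hmul : b * (x + (b - 1)) ≤ b * b ^ (L + 1) := Nat.mul_le_mul_left _ hxb
    have hpow : b ^ (L + 2) = b * b ^ (L + 1) := by ring
    have hrb : r * (b - 1) ≤ (b - 1) * (b - 1) :=
      Nat.mul_le_mul_right _ (by omega)
    have hbb : (b - 1) * (b - 1) < b * (b - 1) :=
      mul_lt_mul_of_pos_right (by omega) (by omega)
    have hdist : b * (x + (b - 1)) = b * x + b * (b - 1) := by ring
    omega
  have : Nat.log b ((j + 1) * (b - 1) + 1) = L + 1 := by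
    rw [key]
    exact Nat.log_eq_of_pow_le_of_lt_pow hlow hhigh
  rw [BD, this]
  rfl

-- target value: T m = minimal total over splits
def TT (b m : ℕ) : ℕ := ∑ j ∈ Finset.range m, (BD b (j / b) + 1)

lemma star (b : ℕ) (hb : 1 < b) (m : ℕ) :
    FF b (m + 1) = (m + 1) + TT b m := by
  rw [FF, Finset.sum_range_succ']
  simp only [BD_succ b hb]
  have : BD b 0 = 0 := by simp [BD]
  rw [this, TT, Finset.sum_add_distrib, Finset.sum_add_distrib]
  simp [Finset.sum_const, Finset.card_range]
  omega


/-- the balanced split -/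
def AA (b m i : ℕ) : ℕ := (m + b - 1 - i) / b

lemma TT_succ (b m : ℕ) : TT b (m + 1) = TT b m + (BD b (m / b) + 1) :=
  Finset.sum_range_succ _ m

lemma AA_mod (b : ℕ) (hb : 1 < b) (m : ℕ) : AA b m (m % b) = m / b := by
  rw [AA]
  generalize hq : m / b = q
  generalize hr : m % b = r
  have h1 : r + b * q = m := by rw [← hq, ← hr]; exact Nat.mod_add_div m b
  have h2 : r < b := by rw [← hr]; exact Nat.mod_lt _ (by omega)
  have e : m + b - 1 - r = b * q + (b - 1) := by omega
  rw [e, Nat.mul_add_div (by omega), Nat.div_eq_of_lt (by omega), add_zero]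

lemma AA_succ (b : ℕ) (hb : 1 < b) (m i : ℕ) (hi : i < b) :
    AA b (m + 1) i = AA b m i + if i = m % b then 1 else 0 := by
  have e : m + 1 + b - 1 - i = (m + b - 1 - i) + 1 := by omega
  rw [AA, e, Nat.succ_div, AA]
  congr 1
  have hiff : b ∣ (m + b - 1 - i) + 1 ↔ i = m % b := by
    have e2 : m + b - 1 - i + 1 = m + b - i := by omega
    rw [e2]
    constructor
    · rintro ⟨t, ht⟩
      rcases t with _ | s
      · simp at ht; omega
      · have e3 : b * (s + 1) = b * s + b := Nat.mul_succ b s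
        have e4 : m = b * s + i := by omega
        rw [e4, Nat.mul_add_mod, Nat.mod_eq_of_lt hi]
    · intro h
      have h1 := Nat.mod_add_div m b
      have h2 : b * (m / b + 1) = b * (m / b) + b := by ring
      exact ⟨m / b + 1, by omega⟩
  by_cases h : i = m % b
  · rw [if_pos (hiff.mpr h), if_pos h]
  · rw [if_neg (fun hc => h (hiff.mp hc)), if_neg h]

lemma achieve (b : ℕ) (hb : 1 < b) (m : ℕ) :
    (∑ i : Fin b, AA b m (i : ℕ)) = m ∧
      (∑ i : Fin b, FF b (AA b m (i : ℕ))) = TT b m := by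
  induction m with
  | zero =>
    have h0 : ∀ i : Fin b, AA b 0 (i : ℕ) = 0 := by
      intro i
      exact Nat.div_eq_of_lt (by have := i.isLt; omega)
    simp [h0, FF, TT]
  | succ m ih =>
    obtain ⟨ih1, ih2⟩ := ih
    have hstep : ∀ i : Fin b, AA b (m + 1) (i : ℕ) =
        AA b m (i : ℕ) + if (i : ℕ) = m % b then 1 else 0 :=
      fun i => AA_succ b hb m i i.isLt
    have hbpos : 0 < b := by omega
    set i₀ : Fin b := ⟨m % b, Nat.mod_lt _ hbpos⟩ with hi₀
    have hcond : ∀ i : Fin b, ((i : ℕ) = m % b) ↔ (i = i₀) := by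
      intro i; rw [Fin.ext_iff]
    constructor
    · calc (∑ i : Fin b, AA b (m+1) (i:ℕ))
          = ∑ i : Fin b, (AA b m (i:ℕ) + if i = i₀ then 1 else 0) := by
            apply Finset.sum_congr rfl; intro i _
            rw [hstep i]
            congr 1
            simp [hcond i]
        _ = m + 1 := by
            rw [Finset.sum_add_distrib, ih1, Finset.sum_ite_eq' Finset.univ i₀ (fun _ => 1),
              if_pos (Finset.mem_univ i₀)]
    · calc (∑ i : Fin b, FF b (AA b (m+1) (i:ℕ)))
          = ∑ i : Fin b, (FF b (AA b m (i:ℕ)) +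
              if i = i₀ then BD b (AA b m (i:ℕ)) + 1 else 0) := by
            apply Finset.sum_congr rfl; intro i _
            rw [hstep i]
            by_cases h : i = i₀
            · rw [if_pos ((hcond i).mpr h), if_pos h, FF, Finset.sum_range_succ]
              rfl
            · rw [if_neg (fun hc => h ((hcond i).mp hc)), if_neg h, add_zero, add_zero]
        _ = TT b (m + 1) := by
            rw [Finset.sum_add_distrib, ih2,
              Finset.sum_ite_eq' Finset.univ i₀ (fun i => BD b (AA b m (i:ℕ)) + 1),
              if_pos (Finset.mem_univ i₀)]
            have h5 : AA b m ((i₀ : Fin b) : ℕ) = m / b := AA_mod b hb m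
            rw [h5, TT_succ]

lemma lower (b : ℕ) (hb : 1 < b) :
    ∀ m (a : Fin b → ℕ), (∑ i, a i) = m → TT b m ≤ ∑ i, FF b (a i) := by
  intro m
  induction m with
  | zero => intro a _; simp [TT]
  | succ m ih =>
    intro a hS
    have hne : (Finset.univ : Finset (Fin b)).Nonempty :=
      ⟨⟨0, by omega⟩, Finset.mem_univ _⟩
    obtain ⟨i₀, -, hmax⟩ := Finset.exists_max_image Finset.univ a hne
    have hsum_le : m + 1 ≤ b * a i₀ := by
      have h1 : (∑ i, a i) ≤ ∑ _i : Fin b, a i₀ :=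
        Finset.sum_le_sum (fun i _ => hmax i (Finset.mem_univ i))
      rw [Finset.sum_const, Finset.card_univ, Fintype.card_fin, smul_eq_mul] at h1
      omega
    have ha0 : 1 ≤ a i₀ := by
      rcases Nat.eq_zero_or_pos (a i₀) with h | h
      · rw [h, Nat.mul_zero] at hsum_le; omega
      · exact h
    set a' := Function.update a i₀ (a i₀ - 1) with ha'
    have hsum_split : (∑ i, a i) = a i₀ + ∑ i ∈ Finset.univ \ {i₀}, a i :=
      Finset.sum_eq_add_sum_sdiff_singleton_of_mem (Finset.mem_univ i₀) a
    have hsum'_split : (∑ i, a' i) = (a i₀ - 1) + ∑ i ∈ Finset.univ \ {i₀}, a i := by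
      rw [ha', Finset.sum_update_of_mem (Finset.mem_univ i₀)]
    have hsum' : (∑ i, a' i) = m := by omega
    have hff : FF b (a i₀) = FF b (a i₀ - 1) + (BD b (a i₀ - 1) + 1) := by
      conv_lhs => rw [show a i₀ = (a i₀ - 1) + 1 by omega]
      rw [FF, Finset.sum_range_succ]
      rfl
    have hsplit : (∑ i, FF b (a i)) = (∑ i, FF b (a' i)) + (BD b (a i₀ - 1) + 1) := by
      have e1 : (∑ i, FF b (a i)) = FF b (a i₀) + ∑ i ∈ Finset.univ \ {i₀}, FF b (a i) :=
        Finset.sum_eq_add_sum_sdiff_singleton_of_mem (Finset.mem_univ i₀) _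
      have e2 : (∑ i, FF b (a' i)) =
          FF b (a i₀ - 1) + ∑ i ∈ Finset.univ \ {i₀}, FF b (a' i) := by
        have := Finset.sum_eq_add_sum_sdiff_singleton_of_mem (Finset.mem_univ i₀)
          (fun i => FF b (a' i))
        rw [this, ha', Function.update_self]
      have e3 : ∑ i ∈ Finset.univ \ {i₀}, FF b (a' i)
          = ∑ i ∈ Finset.univ \ {i₀}, FF b (a i) := by
        apply Finset.sum_congr rfl
        intro i hi
        simp only [Finset.mem_sdiff, Finset.mem_singleton] at hi
        rw [ha', Function.update_of_ne hi.2]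
      rw [e1, e2, e3, hff]
      ring
    have hdiv : m / b ≤ a i₀ - 1 := by
      have e : b * (a i₀) = b * (a i₀ - 1) + b := by
        conv_lhs => rw [show a i₀ = (a i₀ - 1) + 1 from by omega]
        ring
      have h1 : m ≤ b * (a i₀ - 1) + (b - 1) := by omega
      have h3 : (b * (a i₀ - 1) + (b - 1)) / b = a i₀ - 1 := by
        rw [Nat.mul_add_div (show 0 < b by omega), Nat.div_eq_of_lt (show b - 1 < b by omega),
          add_zero]
      calc m / b ≤ (b * (a i₀ - 1) + (b - 1)) / b := Nat.div_le_div_right h1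
        _ = a i₀ - 1 := h3
    calc TT b (m + 1) = TT b m + (BD b (m / b) + 1) := TT_succ b m
      _ ≤ (∑ i, FF b (a' i)) + (BD b (a i₀ - 1) + 1) := by
          have := BD_mono b hdiv
          have := ih a' hsum'
          omega
      _ = ∑ i, FF b (a i) := hsplit.symm

section Statements

open GuessingGame

variable {α ρ : Type*} [DecidableEq α] [DecidableEq ρ]

theorem statement_4 (b : ℕ) (hb : 1 < b) :
    Bound 0 b = 0 ∧
      ∀ n : ℕ, 1 ≤ n →
        Bound n b =
          n + sInf {t : ℕ |
            ∃ a : Fin b → ℕ, (∑ i, a i) = n - 1 ∧ t = ∑ i, Bound (a i) b} := by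
  constructor
  · simp [Bound]
  · intro n hn
    obtain ⟨m, rfl⟩ : ∃ m, n = m + 1 := ⟨n - 1, by omega⟩
    have hmem : TT b m ∈ {t : ℕ |
        ∃ a : Fin b → ℕ, (∑ i, a i) = m + 1 - 1 ∧ t = ∑ i, Bound (a i) b} := by
      obtain ⟨h1, h2⟩ := achieve b hb m
      refine ⟨fun i => AA b m (i : ℕ), by simpa using h1, ?_⟩
      rw [← h2]
      exact Finset.sum_congr rfl fun i _ => (Bound_eq_FF b hb _).symm
    have hlb : ∀ t ∈ {t : ℕ |
        ∃ a : Fin b → ℕ, (∑ i, a i) = m + 1 - 1 ∧ t = ∑ i, Bound (a i) b},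
        TT b m ≤ t := by
      rintro t ⟨a, hsum, rfl⟩
      have h4 : (∑ i, Bound (a i) b) = ∑ i, FF b (a i) :=
        Finset.sum_congr rfl fun i _ => Bound_eq_FF b hb _
      rw [h4]
      exact lower b hb m a (by simpa using hsum)
    have hinf : sInf {t : ℕ |
        ∃ a : Fin b → ℕ, (∑ i, a i) = m + 1 - 1 ∧ t = ∑ i, Bound (a i) b} = TT b m :=
      le_antisymm (Nat.sInf_le hmem) (le_csInf ⟨_, hmem⟩ hlb)
    rw [hinf, Bound_eq_FF b hb, star b hb m]


end Statements
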